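/- For any real X, the Fresnel cosine and sine integrals satisfy C(X)^2 + S(X)^2 ≤ 1, where C(X) = ∫₀^X cos(πx²/2) dx and S(X) = ∫₀^X sin(πx²/2) dx. -/

import Mathlib

open Real intervalIntegral

/-- Fresnel cosine integral `C(X) = ∫₀^X cos(πx²/2) dx`. -/
noncomputable def fresnelC (X : ℝ) : ℝ := ∫ x in (0:ℝ)..X, Real.cos (π * x ^ 2 / 2)

/-- Fresnel sine integral `S(X) = ∫₀^X sin(πx²/2) dx`. -/
noncomputable def fresnelS (X : ℝ) : ℝ := ∫ x in (0:ℝ)..X, Real.sin (π * x ^ 2 / 2)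


lemma sin_ge_cubic {x : ℝ} (hx : 0 ≤ x) : x - x ^ 3 / 6 ≤ Real.sin x := by
  have key : MonotoneOn (fun x : ℝ => Real.sin x - x + x ^ 3 / 6) (Set.Ici 0) := by
    apply monotoneOn_of_deriv_nonneg (convex_Ici 0) (by fun_prop) (by fun_prop)
    intro y hy
    rw [interior_Ici] at hy
    have h : HasDerivAt (fun x : ℝ => Real.sin x - x + x ^ 3 / 6)
        (Real.cos y - 1 + (3 : ℕ) * y ^ 2 / 6) y :=
      ((Real.hasDerivAt_sin y).sub (hasDerivAt_id y)).add ((hasDerivAt_pow 3 y).div_const 6)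
    rw [h.deriv]
    nlinarith [Real.one_sub_sq_div_two_le_cos (x := y)]
  have := key Set.self_mem_Ici (Set.mem_Ici.2 hx) hx
  simp only [Real.sin_zero] at this
  nlinarith [this]

lemma cos_le_quartic {x : ℝ} (hx : 0 ≤ x) : Real.cos x ≤ 1 - x ^ 2 / 2 + x ^ 4 / 24 := by
  have key : MonotoneOn (fun x : ℝ => 1 - x ^ 2 / 2 + x ^ 4 / 24 - Real.cos x) (Set.Ici 0) := by
    apply monotoneOn_of_deriv_nonneg (convex_Ici 0) (by fun_prop) (by fun_prop)
    intro y hy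
    rw [interior_Ici] at hy
    have h : HasDerivAt (fun x : ℝ => 1 - x ^ 2 / 2 + x ^ 4 / 24 - Real.cos x)
        ((0 - (2:ℕ) * y ^ 1 / 2 + (4:ℕ) * y ^ 3 / 24) - (-Real.sin y)) y := by
      exact (((hasDerivAt_const y (1:ℝ)).sub ((hasDerivAt_pow 2 y).div_const 2)).add
        ((hasDerivAt_pow 4 y).div_const 24)).sub (Real.hasDerivAt_cos y)
    rw [h.deriv]
    have := sin_ge_cubic (le_of_lt hy)
    push_cast
    nlinarith [this]
  have := key Set.self_mem_Ici (Set.mem_Ici.2 hx) hx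
  simp only [Real.cos_zero] at this
  nlinarith [this]

lemma sin_le_quintic {x : ℝ} (hx : 0 ≤ x) : Real.sin x ≤ x - x ^ 3 / 6 + x ^ 5 / 120 := by
  have key : MonotoneOn (fun x : ℝ => x - x ^ 3 / 6 + x ^ 5 / 120 - Real.sin x) (Set.Ici 0) := by
    apply monotoneOn_of_deriv_nonneg (convex_Ici 0) (by fun_prop) (by fun_prop)
    intro y hy
    rw [interior_Ici] at hy
    have h : HasDerivAt (fun x : ℝ => x - x ^ 3 / 6 + x ^ 5 / 120 - Real.sin x)
        ((1 - (3:ℕ) * y ^ 2 / 6 + (5:ℕ) * y ^ 4 / 120) - Real.cos y) y := by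
      exact (((hasDerivAt_id y).sub ((hasDerivAt_pow 3 y).div_const 6)).add
        ((hasDerivAt_pow 5 y).div_const 120)).sub (Real.hasDerivAt_sin y)
    rw [h.deriv]
    have := cos_le_quartic (le_of_lt hy)
    push_cast
    nlinarith [this]
  have := key Set.self_mem_Ici (Set.mem_Ici.2 hx) hx
  simp only [Real.sin_zero] at this
  nlinarith [this]


lemma theta_hasDeriv (φ t : ℝ) : HasDerivAt (fun t : ℝ => π * t ^ 2 / 2 - φ) (π * t) t := by
  have : HasDerivAt (fun t : ℝ => π * t ^ 2 / 2 - φ) (π * ((2:ℕ) * t ^ 1) / 2) t :=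
    (((hasDerivAt_pow 2 t).const_mul π).div_const 2).sub_const φ
  convert this using 1; push_cast; ring

lemma tail_nonpos (φ t1 X : ℝ) (h1 : 0 < t1) (hX : t1 ≤ X)
    (hs : Real.sin (π * t1 ^ 2 / 2 - φ) = 1) :
    ∫ t in t1..X, Real.cos (π * t ^ 2 / 2 - φ) ≤ 0 := by
  set g : ℝ → ℝ := fun t => Real.sin (π * t ^ 2 / 2 - φ) / (π * t) with hg
  have hne : ∀ t ∈ Set.uIcc t1 X, t ≠ 0 := by
    intro t ht
    rw [Set.uIcc_of_le hX] at ht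
    exact (lt_of_lt_of_le h1 ht.1).ne'
  have hderiv : ∀ t ∈ Set.uIcc t1 X, HasDerivAt g
      (Real.cos (π * t ^ 2 / 2 - φ) - Real.sin (π * t ^ 2 / 2 - φ) / (π * t ^ 2)) t := by
    intro t ht
    have htne := hne t ht
    have hnum : HasDerivAt (fun t : ℝ => Real.sin (π * t ^ 2 / 2 - φ))
        (Real.cos (π * t ^ 2 / 2 - φ) * (π * t)) t :=
      (Real.hasDerivAt_sin _).comp t (theta_hasDeriv φ t)
    have hden : HasDerivAt (fun t : ℝ => π * t) π t := by
      simpa using (hasDerivAt_id t).const_mul π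
    have hd : HasDerivAt g
        ((Real.cos (π * t ^ 2 / 2 - φ) * (π * t) * (π * t)
          - Real.sin (π * t ^ 2 / 2 - φ) * π) / (π * t) ^ 2) t :=
      hnum.div hden (by positivity)
    convert hd using 1
    field_simp
  have hcontd : ContinuousOn (fun t : ℝ =>
      Real.cos (π * t ^ 2 / 2 - φ) - Real.sin (π * t ^ 2 / 2 - φ) / (π * t ^ 2))
      (Set.uIcc t1 X) := by
    apply ContinuousOn.sub (by fun_prop)
    apply ContinuousOn.div (by fun_prop) (by fun_prop)
    intro t ht
    have := hne t ht
    positivity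
  have hFTC := intervalIntegral.integral_eq_sub_of_hasDerivAt hderiv
    (hcontd.intervalIntegrable)
  -- split the integral
  have hint1 : IntervalIntegrable (fun t : ℝ => Real.cos (π * t ^ 2 / 2 - φ))
      MeasureTheory.volume t1 X := (Continuous.intervalIntegrable (by fun_prop) _ _)
  have hint2 : IntervalIntegrable (fun t : ℝ => Real.sin (π * t ^ 2 / 2 - φ) / (π * t ^ 2))
      MeasureTheory.volume t1 X := by
    apply ContinuousOn.intervalIntegrable
    apply ContinuousOn.div (by fun_prop) (by fun_prop)
    intro t ht; have := hne t ht; positivity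
  rw [intervalIntegral.integral_sub hint1 hint2] at hFTC
  -- bound ∫ sinθ/(πt²) ≤ (1/π)(1/t1 - 1/X)
  have hbound2 : ∫ t in t1..X, Real.sin (π * t ^ 2 / 2 - φ) / (π * t ^ 2)
      ≤ 1 / (π * t1) - 1 / (π * X) := by
    have hmon : ∫ t in t1..X, Real.sin (π * t ^ 2 / 2 - φ) / (π * t ^ 2)
        ≤ ∫ t in t1..X, 1 / (π * t ^ 2) := by
      apply intervalIntegral.integral_mono_on hX hint2
      · apply ContinuousOn.intervalIntegrable
        apply ContinuousOn.div (by fun_prop) (by fun_prop)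
        intro t ht
        rw [Set.uIcc_of_le hX] at ht
        have : (0:ℝ) < t := lt_of_lt_of_le h1 ht.1
        positivity
      · intro t ht
        have htpos : (0:ℝ) < t := lt_of_lt_of_le h1 ht.1
        have : (0:ℝ) < π * t ^ 2 := by positivity
        apply div_le_div_of_nonneg_right (Real.sin_le_one _) this.le |>.trans_eq rfl
    have heval : ∫ t in t1..X, 1 / (π * t ^ 2) = 1 / (π * t1) - 1 / (π * X) := by
      have hd : ∀ t ∈ Set.uIcc t1 X, HasDerivAt (fun t : ℝ => -(π * t)⁻¹)
          (1 / (π * t ^ 2)) t := by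
        intro t ht
        have htne := hne t ht
        have hden : HasDerivAt (fun t : ℝ => π * t) π t := by
          simpa using (hasDerivAt_id t).const_mul π
        have h2 : HasDerivAt (fun t : ℝ => -(π * t)⁻¹) (-(-π / (π * t) ^ 2)) t :=
          (hden.inv (by positivity)).neg
        convert h2 using 1
        field_simp
      have hint3 : IntervalIntegrable (fun t : ℝ => 1 / (π * t ^ 2))
          MeasureTheory.volume t1 X := by
        apply ContinuousOn.intervalIntegrable
        apply ContinuousOn.div (by fun_prop) (by fun_prop)
        intro t ht; have := hne t ht; positivity
      rw [intervalIntegral.integral_eq_sub_of_hasDerivAt hd hint3]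
      have hXpos : (0:ℝ) < X := lt_of_lt_of_le h1 hX
      field_simp
      ring
    linarith [hmon, heval.le, heval.ge]
  have hgX : g X ≤ 1 / (π * X) := by
    rw [hg]
    have hXpos : (0:ℝ) < X := lt_of_lt_of_le h1 hX
    apply div_le_div_of_nonneg_right (Real.sin_le_one _) (by positivity : (0:ℝ) ≤ π * X) |>.trans_eq
    rw [one_div]
  have hgt1 : g t1 = 1 / (π * t1) := by rw [hg]; simp [hs]
  linarith [hFTC, hbound2, hgX, hgt1.le, hgt1.ge]


lemma hasDerivAt_poly11 (c1 c3 c5 c7 c9 c11 t : ℝ) :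
    HasDerivAt (fun t : ℝ => c1*t + c3*t^3 + c5*t^5 + c7*t^7 + c9*t^9 + c11*t^11)
      (c1 + 3*c3*t^2 + 5*c5*t^4 + 7*c7*t^6 + 9*c9*t^8 + 11*c11*t^10) t := by
  have h := (((((((hasDerivAt_pow 1 t).const_mul c1).add
    ((hasDerivAt_pow 3 t).const_mul c3)).add
    ((hasDerivAt_pow 5 t).const_mul c5)).add
    ((hasDerivAt_pow 7 t).const_mul c7)).add
    ((hasDerivAt_pow 9 t).const_mul c9)).add
    ((hasDerivAt_pow 11 t).const_mul c11))
  convert h using 1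
  case e'_8 => ext x; simp only [Pi.add_apply]; ring
  case e'_9 => push_cast; ring
  all_goals rfl

lemma integral_quintic (a : ℝ) :
    (∫ t in (0:ℝ)..a,
      (π*(a^2-t^2)/2 - (π*(a^2-t^2)/2)^3/6 + (π*(a^2-t^2)/2)^5/120))
      = π/3*a^3 - π^3/105*a^7 + π^5/10395*a^11 := by
  have key : ∀ t ∈ Set.uIcc (0:ℝ) a,
      HasDerivAt (fun t : ℝ =>
        (π/2*a^2 - (π/2)^3/6*a^6 + (π/2)^5/120*a^10)*t
        + (-(π/2)/3 + (π/2)^3/6*a^4 - (π/2)^5/72*a^8)*t^3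
        + (-(π/2)^3/10*a^2 + (π/2)^5/60*a^6)*t^5
        + ((π/2)^3/42 - (π/2)^5/84*a^4)*t^7
        + ((π/2)^5/216*a^2)*t^9
        + (-(π/2)^5/1320)*t^11)
      (π*(a^2-t^2)/2 - (π*(a^2-t^2)/2)^3/6 + (π*(a^2-t^2)/2)^5/120) t := by
    intro t _
    have h := hasDerivAt_poly11 (π/2*a^2 - (π/2)^3/6*a^6 + (π/2)^5/120*a^10)
      (-(π/2)/3 + (π/2)^3/6*a^4 - (π/2)^5/72*a^8)
      (-(π/2)^3/10*a^2 + (π/2)^5/60*a^6)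
      ((π/2)^3/42 - (π/2)^5/84*a^4)
      ((π/2)^5/216*a^2) (-(π/2)^5/1320) t
    convert h using 1
    ring
  rw [intervalIntegral.integral_eq_sub_of_hasDerivAt key
    (Continuous.intervalIntegrable (by fun_prop) _ _)]
  ring

lemma ratI {s : ℝ} (h0 : 0 ≤ s) (h2 : s ≤ 2) :
    (s + 25/16) * (10472/10000*s - 295297/1000000*s^3 + 2944110/100000000*s^5) ≤ 5/2 := by
  nlinarith [sq_nonneg (s - 8/5), mul_nonneg h0 (sub_nonneg.2 h2), sq_nonneg (s-1),
    mul_nonneg (mul_nonneg h0 h0) (sub_nonneg.2 h2), sq_nonneg (s*(s-8/5)),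
    mul_nonneg (mul_nonneg h0 (sub_nonneg.2 h2)) (sq_nonneg (s-8/5)),
    mul_nonneg (mul_nonneg (mul_nonneg h0 h0) (sub_nonneg.2 h2)) (sq_nonneg (s-8/5)),
    mul_nonneg (mul_nonneg h0 (sub_nonneg.2 h2)) (sq_nonneg (s-1)),
    sq_nonneg (s^2-5/2)]

lemma ratU {s : ℝ} (h0 : 2 ≤ s) (h2 : s ≤ 9/4) :
    (0:ℝ) ≤ 10472/10000*s - 295297/1000000*s^3 + 2944110/100000000*s^5 := by
  nlinarith [mul_nonneg (sub_nonneg.2 h0) (sub_nonneg.2 h2), sq_nonneg (s - 17/8),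
    mul_nonneg (mul_nonneg (sub_nonneg.2 h0) (sub_nonneg.2 h2)) (sq_nonneg (s-17/8)),
    mul_nonneg (mul_nonneg (sub_nonneg.2 h0) (sub_nonneg.2 h2)) (sq_nonneg s)]

lemma ratII {s : ℝ} (h0 : 2 ≤ s) (h2 : s ≤ 9/4) :
    (s + 9/4)/3 * (10472/10000*s - 295297/1000000*s^3 + 2944110/100000000*s^5) - (s - 2) ≤ 1 := by
  nlinarith [mul_nonneg (sub_nonneg.2 h0) (sub_nonneg.2 h2), sq_nonneg (s - 17/8),
    mul_nonneg (mul_nonneg (sub_nonneg.2 h0) (sub_nonneg.2 h2)) (sq_nonneg (s-17/8)),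
    mul_nonneg (mul_nonneg (sub_nonneg.2 h0) (sub_nonneg.2 h2)) (sq_nonneg s),
    mul_nonneg (mul_nonneg (sub_nonneg.2 h0) (sub_nonneg.2 h2)) (sq_nonneg (s-2))]


lemma pi_cube_ub : π^3 < (31.00629 : ℝ) := by
  have hπ1 : (3.141592 : ℝ) < π := Real.pi_gt_d6
  have hπ2 : π < 3.141593 := Real.pi_lt_d6
  nlinarith [Real.pi_pos, sq_nonneg (π - 3.141592), sq_nonneg (π - 3.141593)]

lemma pi_cube_lb : (31.00625 : ℝ) < π^3 := by
  have hπ1 : (3.141592 : ℝ) < π := Real.pi_gt_d6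
  have hπ2 : π < 3.141593 := Real.pi_lt_d6
  nlinarith [Real.pi_pos, sq_nonneg (π - 3.141592), sq_nonneg (π - 3.141593)]

lemma pi_five_ub : π^5 < (306.0199 : ℝ) := by
  have hπ1 : (3.141592 : ℝ) < π := Real.pi_gt_d6
  have hπ2 : π < 3.141593 := Real.pi_lt_d6
  nlinarith [pi_cube_ub, pi_cube_lb, Real.pi_pos, sq_nonneg (π - 3.141592),
    sq_nonneg (π - 3.141593)]

lemma pi_five_lb : (306.0190 : ℝ) < π^5 := by
  have hπ1 : (3.141592 : ℝ) < π := Real.pi_gt_d6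
  have hπ2 : π < 3.141593 := Real.pi_lt_d6
  nlinarith [pi_cube_ub, pi_cube_lb, Real.pi_pos, sq_nonneg (π - 3.141592),
    sq_nonneg (π - 3.141593)]

-- (III): p ≥ 1/2 on [π, 9π/8]
lemma polyIII {z : ℝ} (h0 : π ≤ z) (h2 : z ≤ 9*π/8) :
    1/2 ≤ z - z^3/6 + z^5/120 := by
  have hπ1 : (3.141592 : ℝ) < π := Real.pi_gt_d6
  have hπ2 : π < 3.141593 := Real.pi_lt_d6
  have hz1 : (3.141592 : ℝ) < z := lt_of_lt_of_le hπ1 h0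
  have hz2 : z ≤ 3.5342922 := le_trans h2 (by nlinarith)
  nlinarith [mul_nonneg (sub_nonneg.2 hz1.le) (sub_nonneg.2 hz2), sq_nonneg (z - 3.3),
    mul_nonneg (mul_nonneg (sub_nonneg.2 hz1.le) (sub_nonneg.2 hz2)) (sq_nonneg (z-3.3)),
    mul_nonneg (mul_nonneg (sub_nonneg.2 hz1.le) (sub_nonneg.2 hz2)) (sq_nonneg z),
    sq_nonneg (z-3.141592), sq_nonneg (z-3.5342922)]

lemma u_le_rat {s : ℝ} (h0 : 0 ≤ s) :
    π*s/3 - π^3*s^3/105 + π^5*s^5/10395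
      ≤ 10472/10000*s - 295297/1000000*s^3 + 2944110/100000000*s^5 := by
  have h1 : π < 3.141593 := Real.pi_lt_d6
  have h2 := pi_cube_lb
  have h3 := pi_five_ub
  have k1 : s * (3.141593 - π) ≥ 0 := mul_nonneg h0 (by linarith)
  have k2 : s^3 * (π^3 - 31.00625) ≥ 0 := mul_nonneg (pow_nonneg h0 3) (by linarith)
  have k3 : s^5 * (306.0199 - π^5) ≥ 0 := mul_nonneg (pow_nonneg h0 5) (by linarith)
  nlinarith [k1, k2, k3, pow_nonneg h0 3, pow_nonneg h0 5, h0]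

lemma cos_eq_sin_aux (t1 φ : ℝ) (hφ : φ = π*t1^2/2 - π/2) (t : ℝ) :
    Real.cos (π * t ^ 2 / 2 - φ) = Real.sin (π*(t1^2-t^2)/2) := by
  rw [hφ, show π*t^2/2 - (π*t1^2/2 - π/2) = π/2 - π*(t1^2-t^2)/2 by ring,
    Real.cos_pi_div_two_sub]

lemma intF (φ : ℝ) (a b : ℝ) :
    IntervalIntegrable (fun t : ℝ => Real.cos (π * t ^ 2 / 2 - φ)) MeasureTheory.volume a b :=
  Continuous.intervalIntegrable (by fun_prop) a b

/-- the quintic upper bound for the first-hump integral -/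
lemma hump_quintic (t1 φ : ℝ) (h1 : 0 ≤ t1) (hφ : φ = π*t1^2/2 - π/2) {c : ℝ}
    (hc0 : 0 ≤ c) (hc1 : c ≤ t1) :
    ∫ t in c..t1, Real.cos (π * t ^ 2 / 2 - φ)
      ≤ (π/3*t1^3 - π^3/105*t1^7 + π^5/10395*t1^11)
        - ∫ t in (0:ℝ)..c, (π*(t1^2-t^2)/2 - (π*(t1^2-t^2)/2)^3/6 + (π*(t1^2-t^2)/2)^5/120) := by
  have hp : IntervalIntegrable (fun t : ℝ =>
      π*(t1^2-t^2)/2 - (π*(t1^2-t^2)/2)^3/6 + (π*(t1^2-t^2)/2)^5/120)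
      MeasureTheory.volume c t1 := Continuous.intervalIntegrable (by fun_prop) _ _
  have step1 : ∫ t in c..t1, Real.cos (π * t ^ 2 / 2 - φ)
      ≤ ∫ t in c..t1, (π*(t1^2-t^2)/2 - (π*(t1^2-t^2)/2)^3/6 + (π*(t1^2-t^2)/2)^5/120) := by
    apply intervalIntegral.integral_mono_on hc1 (intF φ c t1) hp
    intro t ht
    rw [cos_eq_sin_aux t1 φ hφ t]
    apply sin_le_quintic
    have h2 : t ≤ t1 := ht.2
    have h0t : 0 ≤ t := le_trans hc0 ht.1
    have hsq : (0:ℝ) ≤ t1^2 - t^2 := by nlinarith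
    nlinarith [mul_nonneg Real.pi_pos.le hsq]
  have step2 : (∫ t in (0:ℝ)..c, (π*(t1^2-t^2)/2 - (π*(t1^2-t^2)/2)^3/6 + (π*(t1^2-t^2)/2)^5/120))
      + ∫ t in c..t1, (π*(t1^2-t^2)/2 - (π*(t1^2-t^2)/2)^3/6 + (π*(t1^2-t^2)/2)^5/120)
      = π/3*t1^3 - π^3/105*t1^7 + π^5/10395*t1^11 := by
    rw [intervalIntegral.integral_add_adjacent_intervals
      (Continuous.intervalIntegrable (by fun_prop) _ _) hp]
    exact integral_quintic t1
  linarith [step1, step2]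

/-- glue: polynomial bound at most 1, first-hump from 0 case (s ≤ 2) -/
lemma glue_b (t1 : ℝ) (h1 : 0 ≤ t1) (h2 : t1^2 ≤ 2) :
    π/3*t1^3 - π^3/105*t1^7 + π^5/10395*t1^11 ≤ 1 := by
  set s := t1^2 with hs
  have hs0 : 0 ≤ s := sq_nonneg t1
  have heq : π/3*t1^3 - π^3/105*t1^7 + π^5/10395*t1^11
      = t1 * (π*s/3 - π^3*s^3/105 + π^5*s^5/10395) := by rw [hs]; ring
  rw [heq]
  rcases le_or_gt (π*s/3 - π^3*s^3/105 + π^5*s^5/10395) 0 with hu | hu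
  · exact le_trans (mul_nonpos_of_nonneg_of_nonpos h1 hu) (by norm_num)
  · have ht1 : 5/2 * t1 ≤ s + 25/16 := by nlinarith [sq_nonneg (t1 - 5/4)]
    have h3 := u_le_rat hs0
    have h4 := ratI hs0 h2
    nlinarith [mul_le_mul_of_nonneg_left h3 (show (0:ℝ) ≤ s + 25/16 by linarith)]

/-- glue for case c with t0 ≤ 1/2 -/
lemma glue_c (t0 t1 : ℝ) (h0 : 0 ≤ t0) (hhalf : t0 ≤ 1/2) (hs2 : t1^2 = t0^2 + 2)
    (h1 : 0 ≤ t1) :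
    (π/3*t1^3 - π^3/105*t1^7 + π^5/10395*t1^11) - t0/2 ≤ 1 := by
  set s := t1^2 with hs
  have hs0 : 0 ≤ s := sq_nonneg t1
  have hsl : 2 ≤ s := by rw [hs2]; nlinarith [sq_nonneg t0]
  have hsu : s ≤ 9/4 := by rw [hs2]; nlinarith
  have heq : π/3*t1^3 - π^3/105*t1^7 + π^5/10395*t1^11
      = t1 * (π*s/3 - π^3*s^3/105 + π^5*s^5/10395) := by rw [hs]; ring
  rw [heq]
  have ht0 : s - 2 ≤ t0/2 := by rw [hs2]; nlinarith
  rcases le_or_gt (π*s/3 - π^3*s^3/105 + π^5*s^5/10395) 0 with hu | hu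
  · have := mul_nonpos_of_nonneg_of_nonpos h1 hu
    linarith
  · have ht1 : 3 * t1 ≤ s + 9/4 := by nlinarith [sq_nonneg (t1 - 3/2)]
    have h3 := u_le_rat hs0
    have h4 := ratII hsl hsu
    nlinarith [mul_le_mul_of_nonneg_left h3 (show (0:ℝ) ≤ (s + 9/4)/3 by linarith)]

lemma sq_mono {t a : ℝ} (h0 : 0 ≤ t) (h1 : t ≤ a) : t^2 ≤ a^2 := by nlinarith

lemma int_nonpos {f : ℝ → ℝ} {a b : ℝ} (hab : a ≤ b)
    (hf : IntervalIntegrable f MeasureTheory.volume a b)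
    (h : ∀ t ∈ Set.Icc a b, f t ≤ 0) : ∫ t in a..b, f t ≤ 0 := by
  have := intervalIntegral.integral_mono_on (g := fun _ => (0:ℝ)) hab hf
    intervalIntegrable_const h
  simpa using this

lemma case_b' (φ X t1 : ℝ) (hX : 0 ≤ X) (ht1pos : 0 < t1) (ht1sq2 : t1^2 ≤ 2)
    (hφeq : φ = π*t1^2/2 - π/2) :
    ∫ t in (0:ℝ)..X, Real.cos (π * t ^ 2 / 2 - φ) ≤ 1 := by
  have hπ := Real.pi_pos
  have hsin : Real.sin (π*t1^2/2 - φ) = 1 := by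
    rw [show π*t1^2/2 - φ = π/2 by rw [hφeq]; ring, Real.sin_pi_div_two]
  have hφ2 : φ ≤ π/2 := by rw [hφeq]; nlinarith
  have hnonneg : ∀ t ∈ Set.Icc (0:ℝ) t1, 0 ≤ Real.cos (π*t^2/2 - φ) := by
    intro t ht
    apply Real.cos_nonneg_of_mem_Icc
    have h2 : π*t^2 ≤ π*t1^2 :=
      mul_le_mul_of_nonneg_left (sq_mono ht.1 ht.2) hπ.le
    have : 0 ≤ π * t^2 := mul_nonneg hπ.le (sq_nonneg t)
    have he1 : π*t1^2/2 = φ + π/2 := by rw [hφeq]; ring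
    simp only [Set.mem_Icc]
    constructor <;> linarith
  have hB : ∫ t in (0:ℝ)..t1, Real.cos (π * t ^ 2 / 2 - φ) ≤ 1 := by
    have h := hump_quintic t1 φ ht1pos.le hφeq (le_refl (0:ℝ)) ht1pos.le
    rw [intervalIntegral.integral_same] at h
    exact le_trans (by simpa using h) (glue_b t1 ht1pos.le ht1sq2)
  rcases le_total X t1 with h | h
  · have hsplit := intervalIntegral.integral_add_adjacent_intervals
      (intF φ 0 X) (intF φ X t1)
    have hpos : 0 ≤ ∫ t in X..t1, Real.cos (π * t ^ 2 / 2 - φ) :=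
      intervalIntegral.integral_nonneg h
        (fun t ht => hnonneg t ⟨le_trans hX ht.1, ht.2⟩)
    linarith
  · have htail := tail_nonpos φ t1 X ht1pos h hsin
    have hsplit := intervalIntegral.integral_add_adjacent_intervals
      (intF φ 0 t1) (intF φ t1 X)
    linarith

lemma case_c' (φ X t0 t1 : ℝ) (hX : 0 ≤ X) (ht0pos : 0 < t0) (ht0sq2 : t0^2 ≤ 2)
    (hs2 : t1^2 = t0^2 + 2) (h01 : t0 ≤ t1) (ht1pos : 0 < t1)
    (hφeq : φ = π*t1^2/2 - π/2) :
    ∫ t in (0:ℝ)..X, Real.cos (π * t ^ 2 / 2 - φ) ≤ 1 := by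
  have hπ := Real.pi_pos
  have hφeq0 : π*t0^2/2 - φ = -(π/2) := by rw [hφeq, hs2]; ring
  have hsin : Real.sin (π*t1^2/2 - φ) = 1 := by
    rw [show π*t1^2/2 - φ = π/2 by rw [hφeq]; ring, Real.sin_pi_div_two]
  have hφub : φ ≤ 3*π/2 := by
    rw [hφeq, hs2]; nlinarith
  have hnonneg : ∀ t ∈ Set.Icc t0 t1, 0 ≤ Real.cos (π*t^2/2 - φ) := by
    intro t ht
    apply Real.cos_nonneg_of_mem_Icc
    have ht02 : π*t0^2 ≤ π*t^2 :=
      mul_le_mul_of_nonneg_left (sq_mono ht0pos.le ht.1) hπ.le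
    have ht12 : π*t^2 ≤ π*t1^2 :=
      mul_le_mul_of_nonneg_left (sq_mono (le_trans ht0pos.le ht.1) ht.2) hπ.le
    have he1 : π*t1^2/2 = φ + π/2 := by rw [hφeq]; ring
    simp only [Set.mem_Icc]
    constructor <;> linarith
  have hnonpos : ∀ t ∈ Set.Icc (0:ℝ) t0, Real.cos (π*t^2/2 - φ) ≤ 0 := by
    intro t ht
    rw [← Real.cos_neg]
    apply Real.cos_nonpos_of_pi_div_two_le_of_le
    · have ht02 : π*t^2 ≤ π*t0^2 :=
        mul_le_mul_of_nonneg_left (sq_mono ht.1 ht.2) hπ.le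
      linarith
    · have : 0 ≤ π * t^2 := mul_nonneg hπ.le (sq_nonneg t)
      linarith
  have hM : ∫ t in t0..t1, Real.cos (π * t ^ 2 / 2 - φ) ≤ 1 := by
    rcases le_total t0 (1/2) with hhalf | hhalf
    · have h := hump_quintic t1 φ ht1pos.le hφeq ht0pos.le h01
      have hlow : t0/2 ≤ ∫ t in (0:ℝ)..t0,
          (π*(t1^2-t^2)/2 - (π*(t1^2-t^2)/2)^3/6 + (π*(t1^2-t^2)/2)^5/120) := by
        have hc : ∫ t in (0:ℝ)..t0, (1/2 : ℝ) = t0/2 := by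
          rw [integral_const]; simp; ring
        rw [← hc]
        apply integral_mono_on ht0pos.le
          intervalIntegrable_const (Continuous.intervalIntegrable (by fun_prop) _ _)
        intro t ht
        apply polyIII
        · have htt : t^2 ≤ t0^2 := sq_mono ht.1 ht.2
          have : 2*π ≤ π*(t1^2 - t^2) := by
            rw [hs2]
            nlinarith [mul_le_mul_of_nonneg_left htt hπ.le]
          linarith
        · have h1 : t1^2 ≤ 9/4 := by rw [hs2]; nlinarith
          have h2 : 0 ≤ t^2 := sq_nonneg t
          nlinarith
      have := glue_c t0 t1 ht0pos.le hhalf hs2 ht1pos.le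
      linarith
    · have hone : ∫ t in t0..t1, Real.cos (π * t ^ 2 / 2 - φ) ≤ ∫ t in t0..t1, (1:ℝ) := by
        apply intervalIntegral.integral_mono_on h01 (intF φ t0 t1) intervalIntegrable_const
        intro t _; exact Real.cos_le_one _
      have hc : ∫ t in t0..t1, (1:ℝ) = t1 - t0 := by simp
      have hlen : t1 ≤ t0 + 1 := by nlinarith
      linarith
  rcases le_total X t0 with h | h
  · have : ∫ t in (0:ℝ)..X, Real.cos (π * t ^ 2 / 2 - φ) ≤ 0 := by
      exact int_nonpos hX (intF φ 0 X) (fun t ht => hnonpos t ⟨ht.1, le_trans ht.2 h⟩)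
    linarith
  · have hneg0 : ∫ t in (0:ℝ)..t0, Real.cos (π * t ^ 2 / 2 - φ) ≤ 0 :=
      int_nonpos ht0pos.le (intF φ 0 t0) (fun t ht => hnonpos t ⟨ht.1, ht.2⟩)
    rcases le_total X t1 with h2 | h2
    · have hsplit := intervalIntegral.integral_add_adjacent_intervals
        (intF φ 0 t0) (intF φ t0 X)
      have hsplit2 := intervalIntegral.integral_add_adjacent_intervals
        (intF φ t0 X) (intF φ X t1)
      have hpos : 0 ≤ ∫ t in X..t1, Real.cos (π * t ^ 2 / 2 - φ) :=
        intervalIntegral.integral_nonneg h2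
          (fun t ht => hnonneg t ⟨le_trans h ht.1, ht.2⟩)
      linarith
    · have htail := tail_nonpos φ t1 X ht1pos h2 hsin
      have hsplit := intervalIntegral.integral_add_adjacent_intervals
        (intF φ 0 t0) (intF φ t0 t1)
      have hsplit2 := intervalIntegral.integral_add_adjacent_intervals
        (intF φ 0 t1) (intF φ t1 X)
      linarith

lemma case_c (φ X : ℝ) (hX : 0 ≤ X) (hφ1 : π/2 < φ) (hφ2 : φ ≤ 3*π/2) :
    ∫ t in (0:ℝ)..X, Real.cos (π * t ^ 2 / 2 - φ) ≤ 1 := by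
  have hπ := Real.pi_pos
  have harg0 : 0 < (2*φ-π)/π := div_pos (by linarith) hπ
  have harg1 : 0 < (2*φ+π)/π := div_pos (by linarith) hπ
  have ht0sq : (Real.sqrt ((2*φ-π)/π))^2 = (2*φ-π)/π := Real.sq_sqrt harg0.le
  have ht1sq : (Real.sqrt ((2*φ+π)/π))^2 = (2*φ+π)/π := Real.sq_sqrt harg1.le
  apply case_c' φ X (Real.sqrt ((2*φ-π)/π)) (Real.sqrt ((2*φ+π)/π)) hX
    (Real.sqrt_pos.2 harg0)
  · rw [ht0sq, div_le_iff₀ hπ]; linarith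
  · rw [ht0sq, ht1sq]; field_simp; ring
  · apply Real.sqrt_le_sqrt; rw [div_le_div_iff₀ hπ hπ]; nlinarith
  · exact Real.sqrt_pos.2 harg1
  · rw [ht1sq]; field_simp; ring

lemma key (φ X : ℝ) (hX : 0 ≤ X) (hφ1 : -π < φ) (hφ2 : φ ≤ π) :
    ∫ t in (0:ℝ)..X, Real.cos (π * t ^ 2 / 2 - φ) ≤ 1 := by
  have hπ := Real.pi_pos
  rcases le_or_gt φ (-(π/2)) with hc1 | h1
  · have hcongr : Set.EqOn (fun t : ℝ => Real.cos (π*t^2/2 - φ))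
        (fun t : ℝ => Real.cos (π*t^2/2 - (φ+2*π))) (Set.uIcc 0 X) := by
      intro t _
      simp only
      rw [show π*t^2/2 - φ = (π*t^2/2 - (φ+2*π)) + 2*π by ring, Real.cos_add_two_pi]
    rw [intervalIntegral.integral_congr hcongr]
    exact case_c (φ+2*π) X hX (by linarith) (by linarith)
  · rcases le_or_gt φ (π/2) with hb | hc2
    · have harg : 0 < (2*φ+π)/π := div_pos (by linarith) hπ
      have ht1sq : (Real.sqrt ((2*φ+π)/π))^2 = (2*φ+π)/π := Real.sq_sqrt harg.le
      apply case_b' φ X (Real.sqrt ((2*φ+π)/π)) hX (Real.sqrt_pos.2 harg)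
      · rw [ht1sq, div_le_iff₀ hπ]; linarith
      · rw [ht1sq]; field_simp; ring
    · exact case_c φ X hX hc2 (by linarith)

lemma main_nonneg (X : ℝ) (hX : 0 ≤ X) : fresnelC X ^ 2 + fresnelS X ^ 2 ≤ 1 := by
  set C := fresnelC X with hCdef
  set S := fresnelS X with hSdef
  by_cases hz : (C:ℂ) + (S:ℂ)*Complex.I = 0
  · have hC0 : C = 0 := by have := congrArg Complex.re hz; simpa using this
    have hS0 : S = 0 := by have := congrArg Complex.im hz; simpa using this
    rw [hC0, hS0]; norm_num
  · set z : ℂ := (C:ℂ) + (S:ℂ)*Complex.I with hzdef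
    set φ := Complex.arg z with hφdef
    have habs : ‖z‖ = Real.sqrt (C^2+S^2) := by
      rw [hzdef, Complex.norm_def, Complex.normSq_add_mul_I]
    have hre : z.re = C := by simp [hzdef]
    have him : z.im = S := by simp [hzdef]
    have hrpos : 0 < ‖z‖ := by
      simpa using (norm_pos_iff.mpr hz)
    have hcos : Real.cos φ = C / ‖z‖ := by
      rw [hφdef, Complex.cos_arg hz, hre]
    have hsin : Real.sin φ = S / ‖z‖ := by
      rw [hφdef, Complex.sin_arg, him]
    have hsq : (‖z‖)^2 = C^2 + S^2 := by
      rw [habs, Real.sq_sqrt (by positivity : (0:ℝ) ≤ C^2+S^2)]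
    have hsum : C * Real.cos φ + S * Real.sin φ = ‖z‖ := by
      rw [hcos, hsin]
      field_simp
      nlinarith [hsq]
    have hint : C * Real.cos φ + S * Real.sin φ
        = ∫ t in (0:ℝ)..X, Real.cos (π * t ^ 2 / 2 - φ) := by
      rw [hCdef, hSdef]
      unfold fresnelC fresnelS
      rw [← intervalIntegral.integral_mul_const, ← intervalIntegral.integral_mul_const,
        ← intervalIntegral.integral_add
          (Continuous.intervalIntegrable (by fun_prop) _ _)
          (Continuous.intervalIntegrable (by fun_prop) _ _)]
      apply intervalIntegral.integral_congr
      intro t _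
      simp only
      rw [Real.cos_sub]
    have hφIoc := Complex.arg_mem_Ioc z
    have hkey := key φ X hX hφIoc.1 hφIoc.2
    have habsle : ‖z‖ ≤ 1 := by rw [← hsum, hint]; exact hkey
    have : C^2 + S^2 = (‖z‖)^2 := by
      rw [habs, Real.sq_sqrt (by positivity : (0:ℝ) ≤ C^2+S^2)]
    rw [this]
    nlinarith [hrpos]

lemma fresnelC_neg (Y : ℝ) : fresnelC (-Y) = - fresnelC Y := by
  unfold fresnelC
  have h := intervalIntegral.integral_comp_neg (a := (0:ℝ)) (b := Y)
    (fun x => Real.cos (π * x ^ 2 / 2))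
  simp only [neg_sq, neg_zero] at h
  rw [intervalIntegral.integral_symm (-Y) 0, ← h]

lemma fresnelS_neg (Y : ℝ) : fresnelS (-Y) = - fresnelS Y := by
  unfold fresnelS
  have h := intervalIntegral.integral_comp_neg (a := (0:ℝ)) (b := Y)
    (fun x => Real.sin (π * x ^ 2 / 2))
  simp only [neg_sq, neg_zero] at h
  rw [intervalIntegral.integral_symm (-Y) 0, ← h]

theorem fresnel_sq_add_sq_le_one (X : ℝ) :
    (fresnelC X) ^ 2 + (fresnelS X) ^ 2 ≤ 1 := by
  rcases le_or_gt 0 X with hX | hX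
  · exact main_nonneg X hX
  · have h1 : fresnelC X = - fresnelC (-X) := by
      rw [← fresnelC_neg, neg_neg]
    have h2 : fresnelS X = - fresnelS (-X) := by
      rw [← fresnelS_neg, neg_neg]
    rw [h1, h2, neg_pow, neg_pow]
    simpa using main_nonneg (-X) (by linarith)
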